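/- Let k, ℓ, m, n be positive integers with ℓ > k ≥ 2, n > ℓ + 1, m > k + 1, and F^(k)_m = F^(ℓ)_n. Assume moreover that n < 2^{ℓ/2}. Let α = α(k) be the dominant root for k. Then |2^{n−2} − g(α, k)·α^{m−1}| < 5·2^{n−2}/2^{ℓ/2}, and consequently |1 − g(α, k)·α^{m−1}·2^{−(n−2)}| < 5/2^{ℓ/2}. -/

import Mathlib

/-- `gfib k i` is the `k`-generalized Fibonacci number `F^(k)_n` with the shifted index
`i = n + k - 2`: it is `0` for `i < k - 1` (i.e. `n ≤ 0`), `1` for `i = k - 1`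
(i.e. `F^(k)_1 = 1`), and for `i ≥ k` (i.e. `n ≥ 2`) it is the sum of the `k`
preceding terms. -/
def gfib (k : ℕ) (i : ℕ) : ℕ :=
  if _h1 : i < k - 1 then 0
  else if _h2 : i = k - 1 then 1
  else ∑ j ∈ Finset.range k, gfib k (i - 1 - j)
termination_by i
decreasing_by
  simp_wf
  omega

/-- `genFib k n = F^(k)_n`, the `n`-th `k`-generalized Fibonacci number (for `n ≥ 0`). -/
def genFib (k : ℕ) (n : ℕ) : ℕ := gfib k (n + k - 2)

/-- `g x y = (x - 1)/(2 + (y + 1)(x - 2))`. -/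
noncomputable def g (x y : ℝ) : ℝ := (x - 1) / (2 + (y + 1) * (x - 2))

lemma gfib_of_lt {k i : ℕ} (h : i < k - 1) : gfib k i = 0 := by
  rw [gfib]; simp [h]

lemma gfib_base {k : ℕ} : gfib k (k-1) = 1 := by
  rw [gfib]; simp

lemma gfib_rec {k i : ℕ} (hk : 1 ≤ k) (h : k ≤ i) :
    gfib k i = ∑ j ∈ Finset.range k, gfib k (i - 1 - j) := by
  rw [gfib, dif_neg (by omega), dif_neg (by omega)]

lemma gfib_two {k i : ℕ} (hk : 1 ≤ k) (h : k + 1 ≤ i) :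
    gfib k i + gfib k (i - 1 - k) = 2 * gfib k (i - 1) := by
  obtain ⟨K, rfl⟩ : ∃ K, k = K + 1 := ⟨k - 1, by omega⟩
  have hb := gfib_rec (k := K+1) (i := i-1) hk (by omega)
  rw [Finset.sum_range_succ (fun j => gfib (K+1) (i - 1 - 1 - j)) K] at hb
  have h3 : i - 1 - 1 - K = i - 1 - (K + 1) := by omega
  rw [h3] at hb
  have ha := gfib_rec (k := K+1) (i := i) hk (by omega)
  rw [Finset.sum_range_succ' (fun j => gfib (K+1) (i - 1 - j)) K] at ha
  have h1 : (∑ j ∈ Finset.range K, gfib (K+1) (i - 1 - (j+1)))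
      = ∑ j ∈ Finset.range K, gfib (K+1) (i - 1 - 1 - j) :=
    Finset.sum_congr rfl (fun j _ => by congr 1; omega)
  have h4 : i - 1 - 0 = i - 1 := by omega
  rw [h1, h4] at ha
  omega

lemma gfib_pow {l t : ℕ} (hl : 1 ≤ l) (ht : t ≤ l - 1) : gfib l (l + t) = 2 ^ t := by
  induction t with
  | zero =>
    rw [gfib_rec hl (by omega)]
    rw [Finset.sum_eq_single 0]
    · have e : l + 0 - 1 - 0 = l - 1 := by omega
      rw [e, gfib_base]; rfl
    · intro j hj hj0
      exact gfib_of_lt (by simp at hj; omega)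
    · intro hme; simp at hme; omega
  | succ t ih =>
    have h2 := gfib_two hl (i := l + (t+1)) (by omega)
    have e1 : l + (t + 1) - 1 - l = t := by omega
    have e2 : l + (t + 1) - 1 = l + t := by omega
    rw [e1, e2] at h2
    have hz : gfib l t = 0 := gfib_of_lt (by omega)
    rw [ih (by omega)] at h2
    have e3 : 2 ^ (t+1) = 2 * 2 ^ t := by rw [pow_succ]; ring
    omega

lemma gfib_le {l t : ℕ} (hl : 1 ≤ l) : gfib l (l + t) ≤ 2 ^ t := by
  induction t with
  | zero => rw [gfib_pow hl (by omega)]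
  | succ t ih =>
    have h2 := gfib_two hl (i := l + (t+1)) (by omega)
    have e1 : l + (t + 1) - 1 - l = t := by omega
    have e2 : l + (t + 1) - 1 = l + t := by omega
    rw [e1, e2] at h2
    have e3 : 2 ^ (t+1) = 2 * 2 ^ t := by rw [pow_succ]; ring
    omega

lemma gfib_D {l t : ℕ} (hl : 1 ≤ l) :
    2 ^ (l + t) ≤ gfib l (2*l + t) + (t + 1) * 2 ^ t := by
  induction t with
  | zero =>
    have h2 := gfib_two hl (i := 2*l) (by omega)
    have e1 : 2*l - 1 - l = l - 1 := by omega
    rw [e1, gfib_base] at h2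
    have e2 : 2*l - 1 = l + (l-1) := by omega
    rw [e2, gfib_pow hl (by omega)] at h2
    have e3 : 2 * 2 ^ (l - 1) = 2 ^ (l + 0) := by
      rw [← pow_succ']; congr 1; omega
    have e4 : 2*l + 0 = 2*l := by omega
    rw [e4]
    omega
  | succ t ih =>
    have h2 := gfib_two hl (i := 2*l + (t+1)) (by omega)
    have e1 : 2*l + (t + 1) - 1 - l = l + t := by omega
    have e2 : 2*l + (t + 1) - 1 = 2*l + t := by omega
    rw [e1, e2] at h2
    have hle : gfib l (l + t) ≤ 2 ^ t := gfib_le hl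
    have p1 : 2 ^ (l + (t+1)) = 2 * 2 ^ (l + t) := by rw [← pow_succ']; rfl
    have p2 : 2 ^ (t+1) = 2 * 2 ^ t := by rw [pow_succ]; ring
    nlinarith [ih]

noncomputable section
namespace CPT

variable {k : ℕ} {α : ℝ}

/-- real version of gfib -/
def Fr (k i : ℕ) : ℝ := (gfib k i : ℝ)

def Cc (k : ℕ) (α : ℝ) (j : ℕ) : ℝ := Fr k (j+1) - α * Fr k j

def yy (α : ℝ) (i : ℕ) : ℝ := (α^i * (α-2) + 1)/(α-1)

lemma Fr_of_lt {i : ℕ} (h : i < k - 1) : Fr k i = 0 := by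
  simp [Fr, gfib_of_lt h]

lemma Fr_base : Fr k (k-1) = 1 := by simp [Fr, gfib_base]

lemma Fr_k (hk : 1 ≤ k) : Fr k k = 1 := by
  have := gfib_pow (l := k) (t := 0) hk (by omega)
  simpa [Fr] using this

lemma Fr_rec {i : ℕ} (hk : 1 ≤ k) (h : k ≤ i) :
    Fr k i = ∑ j ∈ Finset.range k, Fr k (i - 1 - j) := by
  simp only [Fr]
  rw [gfib_rec hk h]
  push_cast
  rfl

lemma Fr_two {i : ℕ} (hk : 1 ≤ k) (h : k + 1 ≤ i) :
    Fr k i = 2 * Fr k (i-1) - Fr k (i-1-k) := by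
  have := gfib_two (k := k) (i := i) hk h
  have h2 : (gfib k i : ℝ) + gfib k (i-1-k) = 2 * gfib k (i-1) := by exact_mod_cast congrArg (Nat.cast : ℕ → ℝ) this
  simp only [Fr]; linarith

/-- telescoping -/
lemma htel (hα0 : 0 < α) : ∀ (jj i : ℕ), i ≤ jj →
    Fr k jj - α^i * Fr k (jj - i) = ∑ t ∈ Finset.range i, α^t * Cc k α (jj-1-t) := by
  intro jj i
  induction i with
  | zero => simp
  | succ i ih =>
    intro h
    rw [Finset.sum_range_succ, ← ih (by omega)]
    have e2 : (jj - 1 - i) + 1 = jj - i := by omega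
    have e : jj - 1 - i = jj - (i+1) := by omega
    show Fr k jj - α ^ (i + 1) * Fr k (jj - (i + 1)) =
      Fr k jj - α ^ i * Fr k (jj - i) + α ^ i * (Fr k ((jj-1-i)+1) - α * Fr k (jj-1-i))
    rw [e2, e, pow_succ]
    ring
/-- algebra of the root -/
lemma root_succ (hk : 2 ≤ k) (hα1 : 1 < α)
    (hαroot : α ^ k = ∑ j ∈ Finset.range k, α ^ j) :
    α ^ (k+1) = 2 * α ^ k - 1 := by
  have h1 : α * ∑ j ∈ Finset.range k, α ^ j = ∑ j ∈ Finset.range k, α ^ (j+1) := by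
    rw [Finset.mul_sum]
    exact Finset.sum_congr rfl (fun j _ => by rw [pow_succ]; ring)
  have h2 := Finset.sum_range_succ' (fun j => α ^ j) k
  have h3 := Finset.sum_range_succ (fun j => α ^ j) k
  simp only [pow_zero] at h2
  rw [← hαroot] at h1 h3
  have h4 : α ^ (k+1) = α * α ^ k := by rw [pow_succ]; ring
  linarith

lemma root_two (hk : 2 ≤ k) (hα1 : 1 < α)
    (hαroot : α ^ k = ∑ j ∈ Finset.range k, α ^ j) :
    α ^ k * (2 - α) = 1 := by
  have h4 : α ^ (k+1) = α ^ k * α := pow_succ α k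
  have := root_succ hk hα1 hαroot
  linarith [this, h4]
lemma Cc_le (hk : 2 ≤ k) (hα1 : 1 < α) (hα2 : α < 2)
    (hαroot : α ^ k = ∑ j ∈ Finset.range k, α ^ j) :
    ∀ j, |Cc k α j| ≤ 1 := by
  have hα0 : (0:ℝ) < α := by linarith
  have hαk_pos : 0 < α ^ k := pow_pos hα0 k
  intro j
  induction j using Nat.strong_induction_on with
  | _ j ih =>
    rcases lt_or_ge j k with hj | hj
    · -- base cases
      have hcase : j < k - 2 ∨ j = k - 2 ∨ j = k - 1 := by omega
      rcases hcase with h | h | h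
      · have e1 : Fr k (j+1) = 0 := Fr_of_lt (by omega)
        have e2 : Fr k j = 0 := Fr_of_lt (by omega)
        simp [Cc, e1, e2]
      · have e1 : Fr k (j+1) = 1 := by
          have : j + 1 = k - 1 := by omega
          rw [this, Fr_base]
        have e2 : Fr k j = 0 := Fr_of_lt (by omega)
        simp [Cc, e1, e2]
      · have e1 : Fr k (j+1) = 1 := by
          have : j + 1 = k := by omega
          rw [this, Fr_k (by omega)]
        have e2 : Fr k j = 1 := by rw [h, Fr_base]
        rw [Cc, e1, e2]
        rw [abs_le]; constructor <;> nlinarith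
    · -- inductive case
      have h1 := htel (k := k) hα0 j k hj
      have h2 := Fr_two (k := k) (by omega) (i := j+1) (by omega)
      have e : j + 1 - 1 - k = j - k := by omega
      have e' : j + 1 - 1 = j := by omega
      rw [e, e'] at h2
      have hk1 := root_succ hk hα1 hαroot
      have hid : α ^ k * Cc k α j = ∑ t ∈ Finset.range k, α^t * Cc k α (j-1-t) := by
        rw [← h1]
        show α ^ k * (Fr k (j+1) - α * Fr k j) = _
        rw [h2]
        linear_combination (Fr k j) * (pow_succ α k) - (Fr k j) * hk1
      have hb : |∑ t ∈ Finset.range k, α^t * Cc k α (j-1-t)| ≤ α ^ k := by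
        calc |∑ t ∈ Finset.range k, α^t * Cc k α (j-1-t)|
            ≤ ∑ t ∈ Finset.range k, |α^t * Cc k α (j-1-t)| :=
              Finset.abs_sum_le_sum_abs _ _
          _ ≤ ∑ t ∈ Finset.range k, α^t := by
              apply Finset.sum_le_sum
              intro t ht
              rw [abs_mul, abs_of_pos (pow_pos hα0 t)]
              have hlt : j - 1 - t < j := by omega
              have := ih (j-1-t) hlt
              nlinarith [pow_pos hα0 t]
          _ = α ^ k := hαroot.symm
      have habs : α ^ k * |Cc k α j| ≤ α ^ k := by
        have h5 : |α ^ k * Cc k α j| ≤ α ^ k := by rw [hid]; exact hb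
        rwa [abs_mul, abs_of_pos hαk_pos] at h5
      nlinarith [abs_nonneg (Cc k α j)]
lemma yy_zero (hα1 : 1 < α) : yy α 0 = 1 := by
  have : α - 1 ≠ 0 := by linarith
  simp only [yy, pow_zero, one_mul]
  rw [show α - 2 + 1 = α - 1 by ring]
  exact div_self this

lemma yy_succ (hα1 : 1 < α) (i : ℕ) : yy α (i+1) = α * yy α i - 1 := by
  have h : α - 1 ≠ 0 := by linarith
  simp only [yy]
  field_simp
  ring

lemma yy_last (hk : 2 ≤ k) (hα1 : 1 < α)
    (hαroot : α ^ k = ∑ j ∈ Finset.range k, α ^ j) :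
    α * yy α (k-1) = 1 := by
  have h : α - 1 ≠ 0 := by linarith
  have hpk : α * α ^ (k-1) = α ^ k := by
    rw [← pow_succ']
    congr 1
    omega
  have h2a := root_two hk hα1 hαroot
  simp only [yy]
  rw [← mul_div_assoc, div_eq_one_iff_eq h]
  linear_combination (α-2) * hpk - h2a

lemma yy_nonneg (hk : 2 ≤ k) (hα1 : 1 < α) (hα2 : α < 2)
    (hαroot : α ^ k = ∑ j ∈ Finset.range k, α ^ j) :
    ∀ i ∈ Finset.range k, 0 ≤ yy α i := by
  intro i hi
  simp only [Finset.mem_range] at hi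
  have h2a := root_two hk hα1 hαroot
  have hmono : α ^ i ≤ α ^ k := pow_le_pow_right₀ (by linarith) (by omega)
  apply div_nonneg _ (by linarith)
  nlinarith

lemma yy_sum (hk : 2 ≤ k) (hα1 : 1 < α)
    (hαroot : α ^ k = ∑ j ∈ Finset.range k, α ^ j) :
    (α - 1) * ∑ i ∈ Finset.range k, yy α i = (k:ℝ) - 1 := by
  have h : α - 1 ≠ 0 := by linarith
  have h2a := root_two hk hα1 hαroot
  rw [Finset.mul_sum]
  have hterm : ∀ i ∈ Finset.range k, (α - 1) * yy α i = α^i * (α-2) + 1 := by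
    intro i _
    simp only [yy]
    field_simp
  rw [Finset.sum_congr rfl hterm, Finset.sum_add_distrib, Finset.sum_const,
    ← Finset.sum_mul, ← hαroot, Finset.card_range]
  simp only [nsmul_eq_mul, mul_one]
  linear_combination -h2a

lemma yy_sumT (hk : 2 ≤ k) (hα1 : 1 < α)
    (hαroot : α ^ k = ∑ j ∈ Finset.range k, α ^ j) :
    (α - 1) * ∑ i ∈ Finset.range k, yy α i * α^(k-1-i)
      = α^(k-1) * (((k:ℝ)+1)*α - 2*(k:ℝ)) := by
  have h : α - 1 ≠ 0 := by linarith
  have h2a := root_two hk hα1 hαroot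
  have hpk : α * α ^ (k-1) = α ^ k := by
    rw [← pow_succ']; congr 1; omega
  rw [Finset.mul_sum]
  have hterm : ∀ i ∈ Finset.range k,
      (α - 1) * (yy α i * α^(k-1-i)) = (α-2) * α^(k-1) + α^(k-1-i) := by
    intro i hi
    simp only [Finset.mem_range] at hi
    have hp : α^i * α^(k-1-i) = α^(k-1) := by
      rw [← pow_add]; congr 1; omega
    simp only [yy]
    field_simp
    linear_combination (α - 2) * hp
  rw [Finset.sum_congr rfl hterm, Finset.sum_add_distrib, Finset.sum_const,
    Finset.card_range]
  have hrefl : ∑ i ∈ Finset.range k, α ^ (k-1-i) = α ^ k := by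
    rw [Finset.sum_range_reflect (fun i => α ^ i) k]
    exact hαroot.symm
  rw [hrefl]
  simp only [nsmul_eq_mul]
  linear_combination -hpk
lemma P_eq (hk : 2 ≤ k) (hα1 : 1 < α) (hα2 : α < 2)
    (hαroot : α ^ k = ∑ j ∈ Finset.range k, α ^ j) :
    ∀ N, k - 1 ≤ N → ∑ i ∈ Finset.range k, yy α i * Fr k (N - i) = α ^ (N - (k-1)) := by
  obtain ⟨K, rfl⟩ : ∃ K, k = K + 2 := ⟨k - 2, by omega⟩
  intro N hN
  induction N, hN using Nat.le_induction with
  | base =>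
    rw [Nat.sub_self, pow_zero, Finset.sum_eq_single 0]
    · rw [Nat.sub_zero, yy_zero hα1, one_mul]
      exact Fr_base
    · intro i hi hi0
      have hz : Fr (K+2) (K + 2 - 1 - i) = 0 :=
        Fr_of_lt (by simp only [Finset.mem_range] at hi; omega)
      rw [hz, mul_zero]
    · intro habs; simp only [Finset.mem_range] at habs; omega
  | succ N hN ih =>
    have hrec := Fr_rec (k := K+2) (by omega) (i := N+1) (by omega)
    have hrec' : Fr (K+2) (N+1) = ∑ j ∈ Finset.range (K+2), Fr (K+2) (N - j) := by
      rw [hrec]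
      exact Finset.sum_congr rfl (fun j _ => congrArg (Fr (K+2)) (by omega))
    rw [Finset.sum_range_succ' (fun i => yy α i * Fr (K+2) (N+1-i)) (K+1)]
    have hstep : ∀ i ∈ Finset.range (K+1),
        yy α (i+1) * Fr (K+2) (N+1-(i+1))
          = (α * yy α i) * Fr (K+2) (N-i) - Fr (K+2) (N-i) := by
      intro i hi
      have he : N + 1 - (i+1) = N - i := by omega
      simp only [yy_succ hα1, he]
      ring
    rw [Finset.sum_congr rfl hstep, Finset.sum_sub_distrib, yy_zero hα1, one_mul, Nat.sub_zero, hrec',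
      Finset.sum_range_succ (fun j => Fr (K+2) (N-j)) (K+1)]
    rw [Finset.sum_range_succ (fun i => yy α i * Fr (K+2) (N-i)) (K+1)] at ih
    have hyk : α * yy α (K+1) = 1 := yy_last (k := K+2) (by omega) hα1 hαroot
    have hmulsum : ∑ i ∈ Finset.range (K+1), (α * yy α i) * Fr (K+2) (N-i)
        = α * ∑ i ∈ Finset.range (K+1), yy α i * Fr (K+2) (N-i) := by
      rw [Finset.mul_sum]; exact Finset.sum_congr rfl (fun _ _ => by ring)
    rw [hmulsum]
    have hep : α ^ (N+1-(K+2-1)) = α * α ^ (N-(K+2-1)) := by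
      rw [← pow_succ']; congr 1; omega
    rw [hep, ← ih]
    linear_combination (-(Fr (K+2) (N-(K+1)))) * hyk
lemma geom_lb (hα1 : 1 < α) : ∀ K : ℕ, 2 ≤ K → ((K:ℝ) - 1 + α) ≤ ∑ j ∈ Finset.range K, α ^ j := by
  intro K hK
  induction K, hK using Nat.le_induction with
  | base =>
    rw [Finset.sum_range_succ, Finset.sum_range_one]
    push_cast; nlinarith
  | succ K hK ih =>
    rw [Finset.sum_range_succ]
    have h1 : (1:ℝ) ≤ α ^ K := one_le_pow₀ hα1.le
    push_cast
    push_cast at ih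
    linarith

lemma alpha_ge (hk : 2 ≤ k) (hα1 : 1 < α) (hα2 : α < 2)
    (hαroot : α ^ k = ∑ j ∈ Finset.range k, α ^ j) : (8:ℝ)/5 ≤ α := by
  have h2a := root_two hk hα1 hαroot
  have hmono : α ^ 2 ≤ α ^ k := pow_le_pow_right₀ (by linarith) hk
  have h5 : α^2 * (2 - α) ≤ 1 := by nlinarith
  have h6 : 0 ≤ (α - 1) * (α^2 - α - 1) := by nlinarith
  have h7 : 0 ≤ α^2 - α - 1 := by nlinarith
  nlinarith

lemma w_lb (hk : 2 ≤ k) (hα1 : 1 < α) (hα2 : α < 2)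
    (hαroot : α ^ k = ∑ j ∈ Finset.range k, α ^ j) :
    1/4 ≤ (α - 1) * (((k:ℝ)+1)*α - 2*(k:ℝ)) := by
  have h2a := root_two hk hα1 hαroot
  have hgl : ((k:ℝ) - 1 + α) ≤ α ^ k := hαroot ▸ geom_lb hα1 k hk
  have h85 := alpha_ge hk hα1 hα2 hαroot
  have hx : (2 - α) * ((k:ℝ) - 1 + α) ≤ 1 := by nlinarith
  have h2' : ((k:ℝ)+1)*(2-α) ≤ 1 + (2-α)^2 := by nlinarith
  have hq : (2:ℝ) - ((k:ℝ)+1)*(2-α) ≥ 1 - (2-α)^2 := by linarith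
  have hsq : (2-α)^2 ≤ (2/5:ℝ)^2 := by nlinarith
  have hw : (((k:ℝ)+1)*α - 2*(k:ℝ)) = 2 - ((k:ℝ)+1)*(2-α) := by ring
  rw [hw]
  nlinarith
set_option maxHeartbeats 1000000 in
lemma ebound (hk : 2 ≤ k) (hα1 : 1 < α) (hα2 : α < 2)
    (hαroot : α ^ k = ∑ j ∈ Finset.range k, α ^ j) {m : ℕ} (hm : 1 ≤ m) :
    |(gfib k (m + k - 2) : ℝ) - g α k * α ^ (m - 1)| ≤ 4 * ((k:ℝ) - 1) := by
  have hα0 : (0:ℝ) < α := by linarith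
  have hαne1 : α - 1 ≠ 0 := by intro h; nlinarith
  obtain ⟨N, hNdef⟩ : ∃ N, N = m + k - 2 := ⟨_, rfl⟩
  rw [show m + k - 2 = N from hNdef.symm]
  show |Fr k N - g α (k:ℕ) * α ^ (m - 1)| ≤ 4 * ((k:ℝ) - 1)
  have hNk : k - 1 ≤ N := by omega
  have hPN := P_eq hk hα1 hα2 hαroot N hNk
  have hexp : N - (k-1) = m - 1 := by omega
  rw [hexp] at hPN
  have hT := yy_sumT hk hα1 hαroot
  have hSy := yy_sum hk hα1 hαroot
  have hwb := w_lb hk hα1 hα2 hαroot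
  have hynn := yy_nonneg hk hα1 hα2 hαroot
  have hCle := Cc_le hk hα1 hα2 hαroot
  have hW0 : 0 < ((k:ℝ)+1)*α - 2*(k:ℝ) := by nlinarith [hwb]
  have hg : g α k * (((k:ℝ)+1)*α - 2*(k:ℝ)) = α - 1 := by
    unfold g
    have h9 : (2 + ((k:ℝ)+1)*(α-2)) = ((k:ℝ)+1)*α - 2*(k:ℝ) := by ring
    rw [h9, div_mul_cancel₀]
    exact ne_of_gt hW0
  have hsplit : ∑ i ∈ Finset.range k, yy α i * α^(k-1-i) * ((Fr k N) - α^i * Fr k (N-i))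
      = (∑ i ∈ Finset.range k, yy α i * α^(k-1-i)) * Fr k N
        - α^(k-1) * ∑ i ∈ Finset.range k, yy α i * Fr k (N-i) := by
    rw [Finset.sum_mul, Finset.mul_sum, ← Finset.sum_sub_distrib]
    apply Finset.sum_congr rfl
    intro i hi
    have hp : α^(k-1-i) * α^i = α^(k-1) := by
      rw [← pow_add]; congr 1; simp only [Finset.mem_range] at hi; omega
    linear_combination (-(yy α i * Fr k (N-i))) * hp
  have hkey : (((k:ℝ)+1)*α - 2*(k:ℝ)) * α^(k-1) * ((Fr k N) - g α k * α^(m-1))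
      = (α-1) * ∑ i ∈ Finset.range k, yy α i * α^(k-1-i) * ((Fr k N) - α^i * Fr k (N-i)) := by
    rw [hsplit, hPN]
    linear_combination (-(Fr k N)) * hT - α^(k-1)*α^(m-1) * hg
  -- now bound the sum
  have hterm : ∀ i ∈ Finset.range k,
      |(α-1) * (yy α i * α^(k-1-i) * ((Fr k N) - α^i * Fr k (N-i)))| ≤ yy α i * α^(k-1) := by
    intro i hi
    have hi' : i < k := Finset.mem_range.mp hi
    have htel_i := htel (k := k) hα0 N i (by omega)
    have hppos : 0 < α^(k-1-i) := pow_pos hα0 _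
    have hann : (0:ℝ) ≤ α - 1 := by linarith
    have hynn_i := hynn i hi
    have habs : (α-1) * |Fr k N - α^i * Fr k (N-i)| ≤ α^i - 1 := by
      rw [htel_i]
      have h1 : |∑ t ∈ Finset.range i, α^t * Cc k α (N-1-t)| ≤ ∑ t ∈ Finset.range i, α^t := by
        calc |∑ t ∈ Finset.range i, α^t * Cc k α (N-1-t)|
            ≤ ∑ t ∈ Finset.range i, |α^t * Cc k α (N-1-t)| := Finset.abs_sum_le_sum_abs _ _
          _ ≤ ∑ t ∈ Finset.range i, α^t := by
              apply Finset.sum_le_sum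
              intro t _
              rw [abs_mul, abs_of_pos (pow_pos hα0 t)]
              nlinarith [hCle (N-1-t), pow_pos hα0 t]
      have h2 : ∑ t ∈ Finset.range i, α^t = (α^i - 1)/(α-1) := geom_sum_eq (by intro h; rw [h] at hα1; exact lt_irrefl 1 hα1) i
      rw [h2] at h1
      have h3 := mul_le_mul_of_nonneg_left h1 hann
      have h4 : (α-1) * ((α^i-1)/(α-1)) = α^i - 1 := by field_simp
      rwa [h4] at h3
    have e1 : |(α-1) * (yy α i * α^(k-1-i) * (Fr k N - α^i * Fr k (N-i)))|
        = yy α i * (α^(k-1-i) * ((α-1) * |Fr k N - α^i * Fr k (N-i)|)) := by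
      rw [abs_mul, abs_mul, abs_mul, abs_of_nonneg hann, abs_of_nonneg hynn_i,
        abs_of_pos hppos]
      ring
    rw [e1]
    have hp : α^(k-1-i) * α^i = α^(k-1) := by
      rw [← pow_add]; congr 1; omega
    have e2 : α^(k-1-i) * (α^i - 1) = α^(k-1) - α^(k-1-i) := by linear_combination hp
    have step1 : α^(k-1-i) * ((α-1) * |Fr k N - α^i * Fr k (N-i)|) ≤ α^(k-1) - α^(k-1-i) := by
      rw [← e2]
      exact mul_le_mul_of_nonneg_left habs hppos.le
    have step2 : yy α i * (α^(k-1-i) * ((α-1) * |Fr k N - α^i * Fr k (N-i)|))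
        ≤ yy α i * (α^(k-1) - α^(k-1-i)) := mul_le_mul_of_nonneg_left step1 hynn_i
    nlinarith [hppos, hynn_i]
  -- assemble
  have hsum1 : |(α-1) * ∑ i ∈ Finset.range k, yy α i * α^(k-1-i) * ((Fr k N) - α^i * Fr k (N-i))|
      ≤ α^(k-1) * ∑ i ∈ Finset.range k, yy α i := by
    rw [Finset.mul_sum]
    calc |∑ i ∈ Finset.range k, (α-1) * (yy α i * α^(k-1-i) * ((Fr k N) - α^i * Fr k (N-i)))|
        ≤ ∑ i ∈ Finset.range k, |(α-1) * (yy α i * α^(k-1-i) * ((Fr k N) - α^i * Fr k (N-i)))| :=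
          Finset.abs_sum_le_sum_abs _ _
      _ ≤ ∑ i ∈ Finset.range k, yy α i * α^(k-1) := Finset.sum_le_sum hterm
      _ = α^(k-1) * ∑ i ∈ Finset.range k, yy α i := by
          rw [Finset.mul_sum]; exact Finset.sum_congr rfl (fun _ _ => by ring)
  rw [← hkey] at hsum1
  have hPpos : (0:ℝ) < α^(k-1) := pow_pos hα0 _
  have habsW : |(((k:ℝ)+1)*α - 2*(k:ℝ)) * α^(k-1) * ((Fr k N) - g α k * α^(m-1))|
      = (((k:ℝ)+1)*α - 2*(k:ℝ)) * α^(k-1) * |(Fr k N) - g α k * α^(m-1)| := by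
    rw [abs_mul, abs_mul, abs_of_pos hW0, abs_of_pos hPpos]
  rw [habsW] at hsum1
  -- multiply by (α-1)
  have hq1 := mul_le_mul_of_nonneg_left hsum1 (by linarith : (0:ℝ) ≤ α - 1)
  have hq2 : (α-1) * (α^(k-1) * ∑ i ∈ Finset.range k, yy α i) = α^(k-1) * ((k:ℝ)-1) := by
    calc (α-1) * (α^(k-1) * ∑ i ∈ Finset.range k, yy α i)
        = α^(k-1) * ((α-1) * ∑ i ∈ Finset.range k, yy α i) := by ring
      _ = α^(k-1) * ((k:ℝ)-1) := by rw [hSy]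
  rw [hq2] at hq1
  -- hq1 : (α-1) * (W * α^(k-1) * |e|) ≤ α^(k-1) * (k-1)
  have hEnn : (0:ℝ) ≤ |(Fr k N) - g α (k:ℕ) * α^(m-1)| := abs_nonneg _
  nlinarith [hq1, hwb, hPpos, hEnn,
    mul_le_mul_of_nonneg_right hwb (mul_nonneg hPpos.le hEnn)]
lemma sq_le_pow (K : ℕ) : K^2 ≤ 2^(K+2) := by
  induction K with
  | zero => simp
  | succ K ih =>
    have h1 : K < 2^K := Nat.lt_two_pow_self (n := K)
    have h2 : 2^(K+1+2) = 2*2^(K+2) := by rw [pow_succ]; ring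
    have h3 : 2^(K+2) = 4*2^K := by rw [pow_add]; ring
    nlinarith [ih]


end CPT
end

theorem close_to_power_of_two (k l m n : ℕ) (hk : 2 ≤ k) (hkl : k < l)
    (hn : l + 1 < n) (hm : k + 1 < m) (heq : genFib k m = genFib l n)
    (hsmall : (n : ℝ) < (2 : ℝ) ^ ((l : ℝ) / 2))
    (α : ℝ) (hα1 : 1 < α) (hα2 : α < 2)
    (hαroot : α ^ k = ∑ j ∈ Finset.range k, α ^ j) :
    |(2 : ℝ) ^ (n - 2) - g α k * α ^ (m - 1)| <
      5 * (2 : ℝ) ^ (n - 2) / (2 : ℝ) ^ ((l : ℝ) / 2) ∧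
    |1 - g α k * α ^ (m - 1) * (2 : ℝ) ^ (-((n : ℤ) - 2))| <
      5 / (2 : ℝ) ^ ((l : ℝ) / 2) := by
  have hl1 : 1 ≤ l := by omega
  -- natural number estimates for the l-side
  have hFl_le : genFib l n ≤ 2^(n-2) := by
    have h := gfib_le (l := l) (t := n - 2) hl1
    have e : l + (n-2) = n + l - 2 := by omega
    rw [e] at h
    exact h
  have hFl_ge : 2^(n-2) ≤ genFib l n + (n-l-1) * 2^(n-l-2) := by
    have h := gfib_D (l := l) (t := n - l - 2) hl1
    have e1 : 2*l + (n-l-2) = n + l - 2 := by omega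
    have e2 : l + (n-l-2) = n - 2 := by omega
    have e3 : n - l - 2 + 1 = n - l - 1 := by omega
    rw [e1, e2, e3] at h
    exact h
  -- basic real positivity
  have hL2 : (0:ℝ) < (2:ℝ)^((l:ℝ)/2) := Real.rpow_pos_of_pos (by norm_num) _
  have hsq2 : ((2:ℝ)^((l:ℝ)/2)) * ((2:ℝ)^((l:ℝ)/2)) = (2:ℝ)^(l:ℕ) := by
    rw [← Real.rpow_add (by norm_num)]
    rw [show (l:ℝ)/2 + (l:ℝ)/2 = ((l:ℕ):ℝ) by ring]
    exact Real.rpow_natCast 2 l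
  -- |2^(n-2) - genFib l n| ≤ D
  have c1 : ((genFib l n : ℕ):ℝ) ≤ (2:ℝ)^(n-2) := by exact_mod_cast hFl_le
  have c2 : (2:ℝ)^(n-2) ≤ (genFib l n : ℝ) + ((n-l-1:ℕ):ℝ) * 2^(n-l-2) := by
    exact_mod_cast hFl_ge
  have c3 : (0:ℝ) ≤ ((n-l-1:ℕ):ℝ)*2^(n-l-2) := by positivity
  have hA : |(2:ℝ)^(n-2) - (genFib l n : ℝ)| ≤ ((n-l-1:ℕ):ℝ) * 2^(n-l-2) := by
    rw [abs_le]; constructor <;> linarith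
  -- D < B
  have hnl : ((n-l-1:ℕ):ℝ) < (2:ℝ)^((l:ℝ)/2) := by
    have : ((n-l-1:ℕ):ℝ) ≤ (n:ℝ) := by exact_mod_cast Nat.cast_le.mpr (by omega : n-l-1 ≤ n)
    linarith
  have hsplitpow : (2:ℝ)^(n-2:ℕ) = 2^(n-l-2:ℕ) * (2:ℝ)^(l:ℕ) := by
    rw [← pow_add]; congr 1; omega
  have hD : ((n-l-1:ℕ):ℝ) * 2^(n-l-2:ℕ) < 2^(n-2:ℕ) / (2:ℝ)^((l:ℝ)/2) := by
    rw [lt_div_iff₀ hL2]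
    have hp1 : (0:ℝ) < (2:ℝ)^(n-l-2:ℕ) := by positivity
    calc ((n-l-1:ℕ):ℝ) * 2^(n-l-2:ℕ) * (2:ℝ)^((l:ℝ)/2)
        < (2:ℝ)^((l:ℝ)/2) * 2^(n-l-2:ℕ) * (2:ℝ)^((l:ℝ)/2) := by
          apply mul_lt_mul_of_pos_right _ hL2
          exact mul_lt_mul_of_pos_right hnl hp1
      _ = 2^(n-l-2:ℕ) * ((2:ℝ)^((l:ℝ)/2) * (2:ℝ)^((l:ℝ)/2)) := by ring
      _ = (2:ℝ)^(n-2:ℕ) := by rw [hsq2, ← hsplitpow]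
  -- k-side bound
  have hE : |(genFib k m : ℝ) - g α k * α ^ (m - 1)| ≤ 4*((k:ℝ)-1) :=
    CPT.ebound hk hα1 hα2 hαroot (by omega : 1 ≤ m)
  -- 4(k-1) ≤ 4B
  have hksq : ((k-1:ℕ))^2 ≤ 2^l := by
    calc (k-1:ℕ)^2 ≤ 2^(k-1+2) := CPT.sq_le_pow (k-1)
      _ ≤ 2^l := Nat.pow_le_pow_right (by norm_num) (by omega)
  have hks1 : ((k:ℝ)-1) ≤ (2:ℝ)^((l:ℝ)/2) := by
    have hc : (((k-1:ℕ):ℝ))^2 ≤ (2:ℝ)^(l:ℕ) := by exact_mod_cast hksq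
    have hce : ((k-1:ℕ):ℝ) = (k:ℝ)-1 := by
      have h9 := Nat.cast_sub (R := ℝ) (by omega : 1 ≤ k)
      simpa using h9
    rw [hce] at hc
    nlinarith [hL2, hsq2, hc]
  have hks2 : (2:ℝ)^((l:ℝ)/2) ≤ 2^(n-2:ℕ) / (2:ℝ)^((l:ℝ)/2) := by
    rw [le_div_iff₀ hL2, hsq2]
    have : (2:ℕ)^l ≤ 2^(n-2) := Nat.pow_le_pow_right (by norm_num) (by omega)
    exact_mod_cast this
  have hkB : 4*((k:ℝ)-1) ≤ 4 * (2^(n-2:ℕ) / (2:ℝ)^((l:ℝ)/2)) := by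
    have := le_trans hks1 hks2
    linarith
  -- first conclusion
  have heqR : (genFib k m : ℝ) = (genFib l n : ℝ) := by exact_mod_cast heq
  have hmain : |(2:ℝ)^(n-2) - g α k * α ^ (m-1)| < 5 * (2:ℝ)^(n-2) / (2:ℝ)^((l:ℝ)/2) := by
    have htri : |(2:ℝ)^(n-2) - g α k * α ^ (m-1)|
        ≤ |(2:ℝ)^(n-2) - (genFib l n : ℝ)| + |(genFib k m : ℝ) - g α k * α ^ (m-1)| := by
      rw [heqR]
      exact abs_sub_le _ _ _
    have h5 : 5 * (2:ℝ)^(n-2) / (2:ℝ)^((l:ℝ)/2) = 5 * ((2:ℝ)^(n-2) / (2:ℝ)^((l:ℝ)/2)) := by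
      ring
    rw [h5]
    calc |(2:ℝ)^(n-2) - g α k * α ^ (m-1)|
        ≤ |(2:ℝ)^(n-2) - (genFib l n : ℝ)| + |(genFib k m : ℝ) - g α k * α ^ (m-1)| := htri
      _ ≤ ((n-l-1:ℕ):ℝ) * 2^(n-l-2) + 4*((k:ℝ)-1) := add_le_add hA hE
      _ < (2:ℝ)^(n-2)/(2:ℝ)^((l:ℝ)/2) + 4 * ((2:ℝ)^(n-2)/(2:ℝ)^((l:ℝ)/2)) := by
          apply add_lt_add_of_lt_of_le hD hkB
      _ = 5 * ((2:ℝ)^(n-2) / (2:ℝ)^((l:ℝ)/2)) := by ring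
  refine ⟨hmain, ?_⟩
  -- second conclusion
  have hzpow : (2:ℝ)^(-((n:ℤ)-2)) = ((2:ℝ)^(n-2:ℕ))⁻¹ := by
    have e : -((n:ℤ)-2) = -((n-2:ℕ):ℤ) := by omega
    rw [e, zpow_neg, zpow_natCast]
  rw [hzpow]
  have hp : (0:ℝ) < 2^(n-2:ℕ) := by positivity
  have hrw : 1 - g α k * α ^ (m-1) * ((2:ℝ)^(n-2:ℕ))⁻¹
      = ((2:ℝ)^(n-2:ℕ) - g α k * α ^ (m-1)) / (2:ℝ)^(n-2:ℕ) := by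
    field_simp
  rw [hrw, abs_div, abs_of_pos hp, div_lt_iff₀ hp]
  calc |(2:ℝ)^(n-2:ℕ) - g α k * α ^ (m-1)| < 5 * (2:ℝ)^(n-2) / (2:ℝ)^((l:ℝ)/2) := hmain
    _ = 5 / (2:ℝ)^((l:ℝ)/2) * (2:ℝ)^(n-2:ℕ) := by ring
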